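/- As q → 1 from below, ζ_q(k) = Σ_{m≥1} q^{(k-1)m}/[m]^k tends to ζ(k) = Σ_{m≥1} 1/m^k, for every integer k ≥ 2. -/

import Mathlib

open scoped BigOperators

/-- The q-integer [m] = (1-q^m)/(1-q). -/
noncomputable def qint (q : ℝ) (m : ℕ) : ℝ := (1 - q ^ m) / (1 - q)

/-- Depth-one q-zeta value ζ_q(k) = Σ_{m≥1} q^{(k-1)m}/[m]^k. -/
noncomputable def zetaQ (q : ℝ) (k : ℕ) : ℝ :=
  ∑' m : ℕ, q ^ ((k - 1) * (m + 1)) / (qint q (m + 1)) ^ k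

/-- Depth-two qMZV: sum over m₁ > m₂ ≥ 1, parametrized by m₂ = p.2+1, m₁ = p.2+p.1+2. -/
noncomputable def zetaQ2 (q : ℝ) (k₁ k₂ : ℕ) : ℝ :=
  ∑' p : ℕ × ℕ,
    q ^ ((k₁ - 1) * (p.2 + p.1 + 2) + (k₂ - 1) * (p.2 + 1)) /
      ((qint q (p.2 + p.1 + 2)) ^ k₁ * (qint q (p.2 + 1)) ^ k₂)

/-- Depth-two qMZSV: sum over m₁ ≥ m₂ ≥ 1, parametrized by m₂ = p.2+1, m₁ = p.2+p.1+1. -/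
noncomputable def zetaQStar2 (q : ℝ) (k₁ k₂ : ℕ) : ℝ :=
  ∑' p : ℕ × ℕ,
    q ^ ((k₁ - 1) * (p.2 + p.1 + 1) + (k₂ - 1) * (p.2 + 1)) /
      ((qint q (p.2 + p.1 + 1)) ^ k₁ * (qint q (p.2 + 1)) ^ k₂)

/-- Interpolated q-double zeta value. -/
noncomputable def zetaQT (q t : ℝ) (k₁ k₂ : ℕ) : ℝ :=
  zetaQ2 q k₁ k₂ + t * (zetaQ q (k₁ + k₂) + (1 - q) * zetaQ q (k₁ + k₂ - 1))

open Filter Finset in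
lemma qint_eq_sum {q : ℝ} (hq : q ≠ 1) (n : ℕ) :
    qint q n = ∑ i ∈ Finset.range n, q ^ i := by
  have h1 : 1 - q ≠ 0 := fun h => hq (by linarith [sub_eq_zero.mp h])
  rw [qint, geom_sum_eq hq]
  rw [div_eq_div_iff h1 (fun h => hq (by linarith [sub_eq_zero.mp h]))]
  ring

open Finset in
lemma sum_sq_ge {q : ℝ} (hq0 : 0 < q) (hq1 : q < 1) (n : ℕ) :
    (n : ℝ) ^ 2 * q ^ (n - 1) ≤ (∑ i ∈ Finset.range n, q ^ i) ^ 2 := by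
  have hanti : AntivaryOn (fun i : ℕ => q ^ i) (fun i : ℕ => q ^ (n - 1 - i))
      (↑(Finset.range n) : Set ℕ) := by
    intro i hi j hj hij
    simp only [Finset.coe_range, Set.mem_Iio] at hi hj
    have h1 : n - 1 - j < n - 1 - i :=
      (pow_lt_pow_iff_right_of_lt_one₀ hq0 hq1).mp hij
    have hij' : i ≤ j := by omega
    exact pow_le_pow_of_le_one hq0.le hq1.le hij'
  have hcheb := hanti.card_mul_sum_le_sum_mul_sum
  have h2 : ∑ i ∈ Finset.range n, q ^ i * q ^ (n - 1 - i)
      = (n : ℝ) * q ^ (n - 1) := by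
    rw [Finset.sum_congr rfl (fun i hi => ?_), Finset.sum_const, Finset.card_range,
      nsmul_eq_mul]
    rw [← pow_add]
    congr 1
    have := Finset.mem_range.mp hi
    omega
  have h3 : ∑ i ∈ Finset.range n, q ^ (n - 1 - i) = ∑ i ∈ Finset.range n, q ^ i :=
    Finset.sum_range_reflect (fun i => q ^ i) n
  rw [h2, h3, Finset.card_range] at hcheb
  nlinarith [hcheb]

open Finset in
lemma term_le {q : ℝ} (hq0 : 0 < q) (hq1 : q < 1) {k n : ℕ} (hk : 2 ≤ k) (hn : 0 < n) :
    q ^ ((k - 1) * n) / (∑ i ∈ Finset.range n, q ^ i) ^ k ≤ 1 / (n : ℝ) ^ k := by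
  set S := ∑ i ∈ Finset.range n, q ^ i with hS
  have hSpos : 0 < S := by
    apply Finset.sum_pos (fun i _ => pow_pos hq0 i)
    exact Finset.nonempty_range_iff.mpr hn.ne'
  have hnpos : (0 : ℝ) < (n : ℝ) := by exact_mod_cast hn
  have key : (n : ℝ) ^ k * q ^ ((k - 1) * n) ≤ S ^ k := by
    have hsq : ((n : ℝ) ^ k * q ^ ((k - 1) * n)) ^ 2 ≤ (S ^ k) ^ 2 := by
      have hS2 : ((n : ℝ) ^ 2 * q ^ (n - 1)) ^ k ≤ (S ^ 2) ^ k :=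
        pow_le_pow_left₀ (by positivity) (sum_sq_ge hq0 hq1 n) k
      have hexp : (n - 1) * k ≤ 2 * ((k - 1) * n) := by
        calc (n - 1) * k ≤ n * k := Nat.mul_le_mul_right k (Nat.sub_le n 1)
        _ = k * n := Nat.mul_comm n k
        _ ≤ (2 * (k - 1)) * n := Nat.mul_le_mul_right n (by omega)
        _ = 2 * ((k - 1) * n) := by ring
      have hq' : q ^ (2 * ((k - 1) * n)) ≤ q ^ ((n - 1) * k) :=
        pow_le_pow_of_le_one hq0.le hq1.le hexp
      calc ((n : ℝ) ^ k * q ^ ((k - 1) * n)) ^ 2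
          = (n : ℝ) ^ (2 * k) * q ^ (2 * ((k - 1) * n)) := by
            rw [mul_pow, ← pow_mul, ← pow_mul]; try ring_nf
        _ ≤ (n : ℝ) ^ (2 * k) * q ^ ((n - 1) * k) := by
            exact mul_le_mul_of_nonneg_left hq' (by positivity)
        _ = ((n : ℝ) ^ 2 * q ^ (n - 1)) ^ k := by
            rw [mul_pow, ← pow_mul, ← pow_mul]; try ring_nf
        _ ≤ (S ^ 2) ^ k := hS2
        _ = (S ^ k) ^ 2 := by rw [← pow_mul, ← pow_mul]; try ring_nf
    nlinarith [hsq, pow_pos hSpos k, mul_pos (pow_pos hnpos k) (pow_pos hq0 ((k - 1) * n))]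
  rw [div_le_div_iff₀ (pow_pos hSpos k) (pow_pos hnpos k)]
  linarith [key]

open Filter Finset in
lemma term_tendsto (k n : ℕ) (hn : 0 < n) :
    Filter.Tendsto (fun q : ℝ => q ^ ((k - 1) * n) / (qint q n) ^ k)
      (nhdsWithin 1 (Set.Ioo (0 : ℝ) 1)) (nhds (1 / (n : ℝ) ^ k)) := by
  have hc : ContinuousAt
      (fun q : ℝ => q ^ ((k - 1) * n) / (∑ i ∈ Finset.range n, q ^ i) ^ k) 1 := by
    apply ContinuousAt.div
    · exact (continuous_pow _).continuousAt
    · exact ((continuous_finset_sum _ fun i _ => continuous_pow i).pow k).continuousAt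
    · have : (0 : ℝ) < (n : ℝ) := by exact_mod_cast hn
      simp only [one_pow, Finset.sum_const, Finset.card_range, nsmul_eq_mul, mul_one]
      positivity
  have h : Filter.Tendsto (fun q : ℝ => q ^ ((k - 1) * n) / (∑ i ∈ Finset.range n, q ^ i) ^ k)
      (nhds 1) (nhds (1 / (n : ℝ) ^ k)) := by
    have := hc.tendsto
    simpa using this
  refine Filter.Tendsto.congr' ?_ (h.mono_left nhdsWithin_le_nhds)
  filter_upwards [self_mem_nhdsWithin] with q hq
  rw [qint_eq_sum hq.2.ne n]

theorem stmt_10 (k : ℕ) (hk : 2 ≤ k) :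
    Filter.Tendsto (fun q : ℝ => zetaQ q k) (nhdsWithin 1 (Set.Ioo (0 : ℝ) 1))
      (nhds (∑' m : ℕ, 1 / ((m : ℝ) + 1) ^ k)) := by
  have hsum : Summable (fun m : ℕ => 1 / ((m : ℝ) + 1) ^ k) := by
    have h1 : Summable (fun n : ℕ => 1 / (n : ℝ) ^ k) :=
      Real.summable_one_div_nat_pow.mpr (by omega)
    have h2 := (summable_nat_add_iff 1).mpr h1
    refine h2.congr fun m => ?_
    push_cast
    ring_nf
  have hzq : ∀ q : ℝ, zetaQ q k = ∑' m : ℕ, q ^ ((k - 1) * (m + 1)) / (qint q (m + 1)) ^ k :=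
    fun q => rfl
  simp only [zetaQ]
  apply tendsto_tsum_of_dominated_convergence hsum
  · intro m
    have h := term_tendsto k (m + 1) (Nat.succ_pos m)
    have hcast : ((m + 1 : ℕ) : ℝ) = (m : ℝ) + 1 := by push_cast; ring
    rw [hcast] at h
    exact h
  · filter_upwards [self_mem_nhdsWithin] with q hq m
    have hq0 : 0 < q := hq.1
    have hq1 : q < 1 := hq.2
    have heq : qint q (m + 1) = ∑ i ∈ Finset.range (m + 1), q ^ i :=
      qint_eq_sum hq1.ne (m + 1)
    have hSpos : 0 < ∑ i ∈ Finset.range (m + 1), q ^ i :=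
      Finset.sum_pos (fun i _ => pow_pos hq0 i) (Finset.nonempty_range_iff.mpr (Nat.succ_ne_zero m))
    have hnonneg : 0 ≤ q ^ ((k - 1) * (m + 1)) / (qint q (m + 1)) ^ k := by
      rw [heq]; positivity
    rw [Real.norm_eq_abs, abs_of_nonneg hnonneg, heq]
    have := term_le hq0 hq1 hk (Nat.succ_pos m) (n := m + 1)
    calc q ^ ((k - 1) * (m + 1)) / (∑ i ∈ Finset.range (m + 1), q ^ i) ^ k
        ≤ 1 / ((m + 1 : ℕ) : ℝ) ^ k := this
      _ = 1 / ((m : ℝ) + 1) ^ k := by push_cast; ring
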